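/- Let k be a field of characteristic 5 and R = k[X,Y,Z]/(X² + Y³ + Z⁵). Then for every e ≥ 1, dim_k R/(X^{5^e}, Y^{5^e}, Z^{5^e}) = 2 · 25^e. -/

import Mathlib

set_option maxHeartbeats 1000000
set_option synthInstance.maxHeartbeats 200000
set_option linter.unusedSectionVars false

open MvPolynomial

theorem span_eq_aux (k : Type*) [Field k] [CharP k 5] (n : ℕ) :
    Ideal.span {(X 0 : MvPolynomial (Fin 3) k) ^ 2 + X 1 ^ 3 + X 2 ^ 5,
        X 0 ^ 5 ^ (n+1), X 1 ^ 5 ^ (n+1), X 2 ^ 5 ^ (n+1)}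
      = Ideal.span {(X 0 : MvPolynomial (Fin 3) k) ^ 2 + X 1 ^ 3 + X 2 ^ 5,
        (X 0) ^ (2 * 5 ^ n) + X 1 ^ (3 * 5 ^ n), X 1 ^ (5 * 5 ^ n)} := by
  haveI : Fact (Nat.Prime 5) := ⟨by norm_num⟩
  set R := MvPolynomial (Fin 3) k
  set f : R := X 0 ^ 2 + X 1 ^ 3 + X 2 ^ 5 with hfdef
  set u : R := X 0 ^ 5 ^ n
  set v : R := X 1 ^ 5 ^ n
  set w : R := X 2 ^ 5 ^ n
  have hu5 : (X 0 : R) ^ 5 ^ (n+1) = u ^ 5 := by rw [pow_succ, pow_mul]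
  have hv5 : (X 1 : R) ^ 5 ^ (n+1) = v ^ 5 := by rw [pow_succ, pow_mul]
  have hv5' : (X 1 : R) ^ (5 * 5 ^ n) = v ^ 5 := by rw [mul_comm 5, pow_mul]
  have hw5 : (X 2 : R) ^ 5 ^ (n+1) = w ^ 5 := by rw [pow_succ, pow_mul]
  have hg : (X 0 : R) ^ (2 * 5 ^ n) + X 1 ^ (3 * 5 ^ n) = u ^ 2 + v ^ 3 := by
    rw [mul_comm 2, mul_comm 3, pow_mul, pow_mul]
  have hfrob : f ^ 5 ^ n = u ^ 2 + v ^ 3 + w ^ 5 := by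
    rw [hfdef, add_pow_char_pow, add_pow_char_pow]
    simp only [u, v, w, ← pow_mul]
    ring_nf
  rw [hu5, hv5, hw5, hg, hv5']
  apply le_antisymm <;> rw [Ideal.span_le] <;> intro x hx <;>
    simp only [Set.mem_insert_iff, Set.mem_singleton_iff] at hx
  · rcases hx with h | h | h | h <;> subst h
    · exact Ideal.subset_span (by simp)
    · -- u^5 = (u^3 - u*v^3)*(u^2+v^3) + u*v*v^5
      have : u ^ 5 = (u ^ 3 - u * v ^ 3) * (u ^ 2 + v ^ 3) + (u * v) * v ^ 5 := by ring
      rw [this]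
      exact Ideal.add_mem _
        (Ideal.mul_mem_left _ _ (Ideal.subset_span (by simp)))
        (Ideal.mul_mem_left _ _ (Ideal.subset_span (by simp)))
    · exact Ideal.subset_span (by simp)
    · -- w^5 = f^(5^n) - (u^2+v^3)
      have : w ^ 5 = f ^ 5 ^ n - (u ^ 2 + v ^ 3) := by rw [hfrob]; ring
      rw [this]
      exact Ideal.sub_mem _
        (Ideal.pow_mem_of_mem _ (Ideal.subset_span (by simp)) _ (by positivity))
        (Ideal.subset_span (by simp))
  · rcases hx with h | h | h <;> subst h
    · exact Ideal.subset_span (by simp)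
    · have : u ^ 2 + v ^ 3 = f ^ 5 ^ n - w ^ 5 := by rw [hfrob]; ring
      rw [this]
      exact Ideal.sub_mem _
        (Ideal.pow_mem_of_mem _ (Ideal.subset_span (by simp)) _ (by positivity))
        (Ideal.subset_span (by simp))
    · exact Ideal.subset_span (by simp)

set_option linter.unusedSectionVars false

open MvPolynomial

section Model
variable (k : Type*) [Field k] [CharP k 5] (m : ℕ)

abbrev Rr := MvPolynomial (Fin 3) k

noncomputable def P0 : Polynomial k := Polynomial.X ^ (5 * m)
noncomputable abbrev A0 := AdjoinRoot (P0 k m)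
noncomputable def P1 : Polynomial (A0 k m) :=
  Polynomial.X ^ (2 * m) + Polynomial.C ((AdjoinRoot.root (P0 k m)) ^ (3 * m))
noncomputable abbrev A1 := AdjoinRoot (P1 k m)
noncomputable def P2 : Polynomial (A1 k m) :=
  Polynomial.X ^ 5 + Polynomial.C
    ((AdjoinRoot.root (P1 k m)) ^ 2 + (AdjoinRoot.of (P1 k m) (AdjoinRoot.root (P0 k m))) ^ 3)
noncomputable abbrev A2 := AdjoinRoot (P2 k m)

noncomputable def aElt : A2 k m := AdjoinRoot.of (P2 k m) (AdjoinRoot.root (P1 k m))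
noncomputable def bElt : A2 k m :=
  AdjoinRoot.of (P2 k m) (AdjoinRoot.of (P1 k m) (AdjoinRoot.root (P0 k m)))
noncomputable def cElt : A2 k m := AdjoinRoot.root (P2 k m)

-- relations
lemma rel0 : (AdjoinRoot.root (P0 k m)) ^ (5 * m) = 0 := by
  have := AdjoinRoot.mk_self (f := P0 k m)
  rwa [P0, map_pow, AdjoinRoot.mk_X] at this

lemma rel1 : (AdjoinRoot.root (P1 k m)) ^ (2 * m)
    + (AdjoinRoot.of (P1 k m) (AdjoinRoot.root (P0 k m))) ^ (3 * m) = 0 := by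
  have this : Polynomial.eval₂ (AdjoinRoot.of (P1 k m)) (AdjoinRoot.root (P1 k m))
      (Polynomial.X ^ (2 * m) + Polynomial.C ((AdjoinRoot.root (P0 k m)) ^ (3 * m))) = 0 :=
    AdjoinRoot.eval₂_root (P1 k m)
  simpa [Polynomial.eval₂_add, Polynomial.eval₂_pow, Polynomial.eval₂_X, Polynomial.eval₂_C,
    map_pow] using this

lemma rel2 : (cElt k m) ^ 5 + ((aElt k m) ^ 2 + (bElt k m) ^ 3) = 0 := by
  have this : Polynomial.eval₂ (AdjoinRoot.of (P2 k m)) (AdjoinRoot.root (P2 k m))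
      (Polynomial.X ^ 5 + Polynomial.C
        ((AdjoinRoot.root (P1 k m)) ^ 2 + (AdjoinRoot.of (P1 k m) (AdjoinRoot.root (P0 k m))) ^ 3))
      = 0 := AdjoinRoot.eval₂_root (P2 k m)
  simpa [cElt, aElt, bElt, Polynomial.eval₂_add, Polynomial.eval₂_pow, Polynomial.eval₂_X,
    Polynomial.eval₂_C, map_add, map_pow] using this

noncomputable def φ : MvPolynomial (Fin 3) k →ₐ[k] A2 k m :=
  aeval ![aElt k m, bElt k m, cElt k m]

lemma φ_X0 : φ k m (X 0) = aElt k m := by simp [φ]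
lemma φ_X1 : φ k m (X 1) = bElt k m := by simp [φ]
lemma φ_X2 : φ k m (X 2) = cElt k m := by simp [φ]

lemma φ_f : φ k m ((X 0 : Rr k) ^ 2 + X 1 ^ 3 + X 2 ^ 5) = 0 := by
  have h := rel2 k m
  simp only [map_add, map_pow, φ_X0, φ_X1, φ_X2]
  linear_combination h

lemma φ_g : φ k m ((X 0 : Rr k) ^ (2 * m) + X 1 ^ (3 * m)) = 0 := by
  have h := rel1 k m
  have h2 : (AdjoinRoot.of (P2 k m)) (AdjoinRoot.root (P1 k m) ^ (2*m)
      + (AdjoinRoot.of (P1 k m)) (AdjoinRoot.root (P0 k m)) ^ (3*m)) = 0 := by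
    rw [h, map_zero]
  simpa [φ_X0, φ_X1, aElt, bElt, map_add, map_pow] using h2

lemma φ_v : φ k m ((X 1 : Rr k) ^ (5 * m)) = 0 := by
  have h := rel0 k m
  have h2 : (AdjoinRoot.of (P2 k m)) ((AdjoinRoot.of (P1 k m))
      (AdjoinRoot.root (P0 k m) ^ (5*m))) = 0 := by rw [h]; simp
  simpa [φ_X1, bElt, map_pow] using h2


noncomputable def Ispan : Ideal (Rr k) :=
  Ideal.span {(X 0 : Rr k) ^ 2 + X 1 ^ 3 + X 2 ^ 5,
    (X 0 : Rr k) ^ (2 * m) + X 1 ^ (3 * m), (X 1 : Rr k) ^ (5 * m)}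

noncomputable abbrev Qq := Rr k ⧸ Ispan k m

lemma mk_f : Ideal.Quotient.mk (Ispan k m) ((X 0 : Rr k) ^ 2 + X 1 ^ 3 + X 2 ^ 5) = 0 :=
  Ideal.Quotient.eq_zero_iff_mem.2 (Ideal.subset_span (by simp))
lemma mk_g : Ideal.Quotient.mk (Ispan k m) ((X 0 : Rr k) ^ (2*m) + X 1 ^ (3*m)) = 0 :=
  Ideal.Quotient.eq_zero_iff_mem.2 (Ideal.subset_span (by simp))
lemma mk_v : Ideal.Quotient.mk (Ispan k m) ((X 1 : Rr k) ^ (5*m)) = 0 :=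
  Ideal.Quotient.eq_zero_iff_mem.2 (Ideal.subset_span (by simp))

noncomputable def ψ0 : A0 k m →+* Qq k m :=
  AdjoinRoot.lift (algebraMap k (Qq k m)) (Ideal.Quotient.mk _ (X 1)) (by
    simp only [P0, Polynomial.eval₂_pow, Polynomial.eval₂_X]
    rw [← map_pow, mk_v])

lemma ψ0_root : ψ0 k m (AdjoinRoot.root (P0 k m)) = Ideal.Quotient.mk _ (X 1) :=
  AdjoinRoot.lift_root _
lemma ψ0_alg (z : k) : ψ0 k m ((AdjoinRoot.of (P0 k m)) z) = algebraMap k (Qq k m) z :=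
  AdjoinRoot.lift_of _

noncomputable def ψ1 : A1 k m →+* Qq k m :=
  AdjoinRoot.lift (ψ0 k m) (Ideal.Quotient.mk _ (X 0)) (by
    simp only [P1, Polynomial.eval₂_add, Polynomial.eval₂_pow, Polynomial.eval₂_X,
      Polynomial.eval₂_C]
    rw [map_pow, ψ0_root, ← map_pow, ← map_pow, ← map_add, mk_g])

lemma ψ1_root : ψ1 k m (AdjoinRoot.root (P1 k m)) = Ideal.Quotient.mk _ (X 0) :=
  AdjoinRoot.lift_root _
lemma ψ1_of (z : A0 k m) : ψ1 k m ((AdjoinRoot.of (P1 k m)) z) = ψ0 k m z :=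
  AdjoinRoot.lift_of _

noncomputable def ψ2 : A2 k m →+* Qq k m :=
  AdjoinRoot.lift (ψ1 k m) (Ideal.Quotient.mk _ (X 2)) (by
    simp only [P2, Polynomial.eval₂_add, Polynomial.eval₂_pow, Polynomial.eval₂_X,
      Polynomial.eval₂_C]
    rw [map_add, map_pow, map_pow, ψ1_root, ψ1_of, ψ0_root, ← map_pow, ← map_pow, ← map_pow,
      ← map_add, ← map_add]
    rw [show (X 2 : Rr k) ^ 5 + (X 0 ^ 2 + X 1 ^ 3) = X 0 ^ 2 + X 1 ^ 3 + X 2 ^ 5 by ring, mk_f])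

lemma ψ2_root : ψ2 k m (cElt k m) = Ideal.Quotient.mk _ (X 2) := AdjoinRoot.lift_root _
lemma ψ2_of (z : A1 k m) : ψ2 k m ((AdjoinRoot.of (P2 k m)) z) = ψ1 k m z :=
  AdjoinRoot.lift_of _

noncomputable def φbar : Qq k m →ₐ[k] A2 k m :=
  Ideal.Quotient.liftₐ (Ispan k m) (φ k m) (by
    intro p hp
    have hle : Ispan k m ≤ RingHom.ker (φ k m) := by
      rw [Ispan, Ideal.span_le]
      rintro x hx
      simp only [Set.mem_insert_iff, Set.mem_singleton_iff] at hx
      rcases hx with rfl | rfl | rfl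
      · exact φ_f k m
      · exact φ_g k m
      · exact φ_v k m
    exact hle hp)

lemma φbar_mk (p : Rr k) : φbar k m (Ideal.Quotient.mk _ p) = φ k m p := rfl

lemma ψ2_φbar : (ψ2 k m).comp (φbar k m).toRingHom = RingHom.id (Qq k m) := by
  apply Ideal.Quotient.ringHom_ext
  apply MvPolynomial.ringHom_ext
  · intro a
    have e1 : (Ideal.Quotient.mk (Ispan k m)) (C a : Rr k) = algebraMap k (Qq k m) a := rfl
    have e2 : (φ k m) (C a : Rr k) = algebraMap k (A2 k m) a := by
      simp [φ]
    have e3 : algebraMap k (A2 k m) a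
        = AdjoinRoot.of (P2 k m) (AdjoinRoot.of (P1 k m) (AdjoinRoot.of (P0 k m) a)) := by
      rw [AdjoinRoot.algebraMap_eq' k, AdjoinRoot.algebraMap_eq' k, AdjoinRoot.algebraMap_eq]
      rfl
    simp only [RingHom.comp_apply, RingHom.id_apply, e1]
    rw [show (φbar k m).toRingHom ((algebraMap k (Qq k m)) a)
        = algebraMap k (A2 k m) a from (φbar k m).commutes a]
    rw [e3, ψ2_of, ψ1_of, ψ0_alg]
  · intro i
    have h0 : (ψ2 k m) ((φ k m) (X 0)) = Ideal.Quotient.mk _ (X 0) := by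
      rw [φ_X0, aElt, ψ2_of, ψ1_root]
    have h1 : (ψ2 k m) ((φ k m) (X 1)) = Ideal.Quotient.mk _ (X 1) := by
      rw [φ_X1, bElt, ψ2_of, ψ1_of, ψ0_root]
    have h2 : (ψ2 k m) ((φ k m) (X 2)) = Ideal.Quotient.mk _ (X 2) := by
      rw [φ_X2, ψ2_root]
    fin_cases i
    · simpa [φbar_mk] using h0
    · simpa [φbar_mk] using h1
    · simpa [φbar_mk] using h2

lemma algMap_A2 (a : k) : algebraMap k (A2 k m) a
    = AdjoinRoot.of (P2 k m) (AdjoinRoot.of (P1 k m) (AdjoinRoot.of (P0 k m) a)) := by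
  rw [AdjoinRoot.algebraMap_eq' k, AdjoinRoot.algebraMap_eq' k, AdjoinRoot.algebraMap_eq]
  rfl

lemma range_step0 (t : A0 k m) :
    AdjoinRoot.of (P2 k m) (AdjoinRoot.of (P1 k m) t) ∈ (φ k m).range := by
  induction t using AdjoinRoot.induction_on with
  | ih p =>
    induction p using Polynomial.induction_on with
    | C a =>
      rw [AdjoinRoot.mk_C]
      exact ⟨C a, by simp [φ, algMap_A2]⟩
    | add p q hp hq =>
      rw [map_add, map_add, map_add]
      exact Subalgebra.add_mem _ hp hq
    | monomial n a ih =>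
      rw [pow_succ, ← mul_assoc, map_mul, map_mul, map_mul, AdjoinRoot.mk_X]
      exact Subalgebra.mul_mem _ ih ⟨X 1, φ_X1 k m⟩

lemma range_step1 (t : A1 k m) : AdjoinRoot.of (P2 k m) t ∈ (φ k m).range := by
  induction t using AdjoinRoot.induction_on with
  | ih p =>
    induction p using Polynomial.induction_on with
    | C a => rw [AdjoinRoot.mk_C]; exact range_step0 k m a
    | add p q hp hq => rw [map_add, map_add]; exact Subalgebra.add_mem _ hp hq
    | monomial n a ih =>
      rw [pow_succ, ← mul_assoc, map_mul, map_mul, AdjoinRoot.mk_X]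
      exact Subalgebra.mul_mem _ ih ⟨X 0, φ_X0 k m⟩

lemma range_step2 (t : A2 k m) : t ∈ (φ k m).range := by
  induction t using AdjoinRoot.induction_on with
  | ih p =>
    induction p using Polynomial.induction_on with
    | C a => rw [AdjoinRoot.mk_C]; exact range_step1 k m a
    | add p q hp hq => rw [map_add]; exact Subalgebra.add_mem _ hp hq
    | monomial n a ih =>
      rw [pow_succ, ← mul_assoc, map_mul, AdjoinRoot.mk_X]
      exact Subalgebra.mul_mem _ ih ⟨X 2, φ_X2 k m⟩

lemma φbar_bijective : Function.Bijective (φbar k m) := by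
  constructor
  · intro x y hxy
    have := congrArg (ψ2 k m) hxy
    have hid := ψ2_φbar k m
    calc x = (ψ2 k m) ((φbar k m) x) := by
            rw [show (ψ2 k m) ((φbar k m) x) = ((ψ2 k m).comp (φbar k m).toRingHom) x from rfl,
              hid]; rfl
      _ = (ψ2 k m) ((φbar k m) y) := this
      _ = y := by
            rw [show (ψ2 k m) ((φbar k m) y) = ((ψ2 k m).comp (φbar k m).toRingHom) y from rfl,
              hid]; rfl
  · intro t
    obtain ⟨p, hp⟩ := range_step2 k m t
    exact ⟨Ideal.Quotient.mk _ p, hp⟩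

-- Power bases and finrank
lemma monic_P0 : (P0 k m).Monic := Polynomial.monic_X_pow _
lemma natDegree_P0 : (P0 k m).natDegree = 5 * m := Polynomial.natDegree_X_pow _

noncomputable def pb0 : PowerBasis k (A0 k m) := AdjoinRoot.powerBasis' (monic_P0 k m)

theorem nontrivial_A0 (hm : 0 < m) : Nontrivial (A0 k m) :=
  AdjoinRoot.nontrivial _ (by
    rw [P0, Polynomial.degree_X_pow]
    exact_mod_cast (by positivity : (5*m : ℕ) ≠ 0) ∘ (by exact_mod_cast ·))

lemma monic_P1 (hm : 0 < m) : (P1 k m).Monic := by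
  have := nontrivial_A0 k m hm
  exact Polynomial.monic_X_pow_add_C _ (by positivity)

lemma natDegree_P1 (hm : 0 < m) : (P1 k m).natDegree = 2 * m := by
  have := nontrivial_A0 k m hm
  exact Polynomial.natDegree_X_pow_add_C

noncomputable def pb1 (hm : 0 < m) : PowerBasis (A0 k m) (A1 k m) :=
  AdjoinRoot.powerBasis' (monic_P1 k m hm)

lemma nontrivial_A1 (hm : 0 < m) : Nontrivial (A1 k m) := by
  have := nontrivial_A0 k m hm
  have hd : 0 < (pb1 k m hm).dim := by
    rw [pb1, AdjoinRoot.powerBasis'_dim, natDegree_P1 k m hm]; positivity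
  exact nontrivial_of_ne ((pb1 k m hm).basis ⟨0, hd⟩) 0 ((pb1 k m hm).basis.ne_zero _)

lemma monic_P2 (hm : 0 < m) : (P2 k m).Monic := by
  have := nontrivial_A1 k m hm
  exact Polynomial.monic_X_pow_add_C _ (by norm_num)

lemma natDegree_P2 (hm : 0 < m) : (P2 k m).natDegree = 5 := by
  have := nontrivial_A1 k m hm
  exact Polynomial.natDegree_X_pow_add_C

noncomputable def pb2 (hm : 0 < m) : PowerBasis (A1 k m) (A2 k m) :=
  AdjoinRoot.powerBasis' (monic_P2 k m hm)

lemma finrank_A2 (hm : 0 < m) : Module.finrank k (A2 k m) = 50 * m ^ 2 := by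
  have h0 := nontrivial_A0 k m hm
  have h1 := nontrivial_A1 k m hm
  have free01 : Module.Free k (A0 k m) := Module.Free.of_basis (pb0 k m).basis
  have free12 : Module.Free (A0 k m) (A1 k m) := Module.Free.of_basis (pb1 k m hm).basis
  have free23 : Module.Free (A1 k m) (A2 k m) := Module.Free.of_basis (pb2 k m hm).basis
  have freek1 : Module.Free k (A1 k m) :=
    Module.Free.of_basis ((pb0 k m).basis.smulTower (pb1 k m hm).basis)
  have e1 : Module.finrank k (A0 k m) = 5 * m := by
    rw [(pb0 k m).finrank, pb0, AdjoinRoot.powerBasis'_dim, natDegree_P0]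
  have e2 : Module.finrank (A0 k m) (A1 k m) = 2 * m := by
    rw [(pb1 k m hm).finrank, pb1, AdjoinRoot.powerBasis'_dim, natDegree_P1 k m hm]
  have e3 : Module.finrank (A1 k m) (A2 k m) = 5 := by
    rw [(pb2 k m hm).finrank, pb2, AdjoinRoot.powerBasis'_dim, natDegree_P2 k m hm]
  have t1 : Module.finrank k (A1 k m) = 5 * m * (2 * m) := by
    rw [← Module.finrank_mul_finrank k (A0 k m) (A1 k m), e1, e2]
  have t2 : Module.finrank k (A2 k m) = (5 * m * (2 * m)) * 5 := by
    rw [← Module.finrank_mul_finrank k (A1 k m) (A2 k m), t1, e3]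
  rw [t2]; ring

lemma finrank_Qq (hm : 0 < m) : Module.finrank k (Qq k m) = 50 * m ^ 2 := by
  have E : Qq k m ≃ₐ[k] A2 k m := AlgEquiv.ofBijective (φbar k m) (φbar_bijective k m)
  rw [E.toLinearEquiv.finrank_eq, finrank_A2 k m hm]

end Model


/-- The Hilbert-Kunz function of the E₈ ring `k[X,Y,Z]/(X²+Y³+Z⁵)`
in characteristic 5 is `e ↦ 2·p^{2e}` for `e ≥ 1`. -/
theorem stmt_4 (k : Type*) [Field k] [CharP k 5] (e : ℕ) (he : 1 ≤ e) :
    Module.finrank k (MvPolynomial (Fin 3) k ⧸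
        (Ideal.span {(X 0 : MvPolynomial (Fin 3) k) ^ 2 + X 1 ^ 3 + X 2 ^ 5,
          X 0 ^ 5 ^ e, X 1 ^ 5 ^ e, X 2 ^ 5 ^ e} : Ideal (MvPolynomial (Fin 3) k)))
      = 2 * 25 ^ e := by
  obtain ⟨n, rfl⟩ : ∃ n, e = n + 1 := ⟨e - 1, (Nat.succ_pred_eq_of_pos he).symm⟩
  rw [span_eq_aux k n]
  have hm : 0 < 5 ^ n := by positivity
  have := finrank_Qq k (5 ^ n) hm
  rw [show (Ideal.span {(X 0 : MvPolynomial (Fin 3) k) ^ 2 + X 1 ^ 3 + X 2 ^ 5,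
      (X 0 : MvPolynomial (Fin 3) k) ^ (2 * 5 ^ n) + X 1 ^ (3 * 5 ^ n),
      (X 1 : MvPolynomial (Fin 3) k) ^ (5 * 5 ^ n)}) = Ispan k (5 ^ n) from rfl]
  rw [this]
  have : (25 : ℕ) ^ (n + 1) = 25 * (5 ^ n) ^ 2 := by
    rw [pow_succ, mul_comm, show (25:ℕ) = 5^2 from rfl, ← pow_mul, ← pow_mul, mul_comm 2 n]
  rw [this]; ring
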